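/- Let d ∈ (0,1), T > 0, α = (ln(1+d) − ln(1−d))/(2d), β = (ln(1+d) + ln(1−d))/2, and let (b_n), (g_n) satisfy b_{n+1} = b_n(1 + d(g_n − T)/T) with g_n ∈ [0, 2T] and c ≤ b_n ≤ C for constants 0 < c ≤ C. Then for every N ≥ 1, (1/N)∑_{n=1}^N g_n ≤ T·ln(C/c)/(N·α·d) + (1 − β/(α d))·T. -/

import Mathlib

open Real

lemma chord_log {d : ℝ} (hd0 : 0 < d) (hd1 : d < 1) {x : ℝ}
    (hx1 : -d ≤ x) (hx2 : x ≤ d) :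
    (Real.log (1 + d) - Real.log (1 - d)) / (2 * d) * x
      + (Real.log (1 + d) + Real.log (1 - d)) / 2 ≤ Real.log (1 + x) := by
  have hdne : d ≠ 0 := ne_of_gt hd0
  have h2d : (0:ℝ) < 2 * d := by linarith
  have ha : 0 ≤ (d - x) / (2 * d) := div_nonneg (by linarith) (by linarith)
  have hb : 0 ≤ (d + x) / (2 * d) := div_nonneg (by linarith) (by linarith)
  have hab : (d - x) / (2 * d) + (d + x) / (2 * d) = 1 := by
    field_simp
    ring
  have hmem1 : (1 - d) ∈ Set.Ioi (0:ℝ) := by simp; linarith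
  have hmem2 : (1 + d) ∈ Set.Ioi (0:ℝ) := by simp; linarith
  have hkey := (strictConcaveOn_log_Ioi.concaveOn).2 hmem1 hmem2 ha hb hab
  simp only [smul_eq_mul] at hkey
  have harg : (d - x) / (2 * d) * (1 - d) + (d + x) / (2 * d) * (1 + d) = 1 + x := by
    field_simp
    ring
  rw [harg] at hkey
  have heq : (Real.log (1 + d) - Real.log (1 - d)) / (2 * d) * x
      + (Real.log (1 + d) + Real.log (1 - d)) / 2
      = (d - x) / (2 * d) * Real.log (1 - d) + (d + x) / (2 * d) * Real.log (1 + d) := by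
    field_simp
    ring
  linarith [hkey, heq.le]

theorem eip1559_finite_upper_bound
    (d T c C : ℝ) (hd : d ∈ Set.Ioo (0:ℝ) 1) (hT : 0 < T)
    (hc : 0 < c) (hcC : c ≤ C)
    (b g : ℕ → ℝ)
    (hg : ∀ n, g n ∈ Set.Icc (0:ℝ) (2 * T))
    (hrec : ∀ n, b (n + 1) = b n * (1 + d * (g n - T) / T))
    (hbd : ∀ n, c ≤ b n ∧ b n ≤ C) :
    ∀ N : ℕ, 1 ≤ N →
      (∑ n ∈ Finset.Icc 1 N, g n) / N ≤
        T * Real.log (C / c) /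
          (N * ((Real.log (1 + d) - Real.log (1 - d)) / (2 * d)) * d) +
        (1 - ((Real.log (1 + d) + Real.log (1 - d)) / 2) /
          (((Real.log (1 + d) - Real.log (1 - d)) / (2 * d)) * d)) * T := by
  obtain ⟨hd0, hd1⟩ := hd
  have hTne : T ≠ 0 := ne_of_gt hT
  set α := (Real.log (1 + d) - Real.log (1 - d)) / (2 * d) with hα
  set β := (Real.log (1 + d) + Real.log (1 - d)) / 2 with hβ
  have hαpos : 0 < α := by
    apply div_pos _ (by linarith)
    have := Real.log_lt_log (by linarith : (0:ℝ) < 1 - d) (by linarith : 1 - d < 1 + d)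
    linarith
  have hαd : 0 < α * d := mul_pos hαpos hd0
  have hxb : ∀ n, -d ≤ d * (g n - T) / T ∧ d * (g n - T) / T ≤ d := by
    intro n
    obtain ⟨h1, h2⟩ := hg n
    constructor
    · rw [le_div_iff₀ hT]; nlinarith
    · rw [div_le_iff₀ hT]; nlinarith
  have hbpos : ∀ n, 0 < b n := fun n => lt_of_lt_of_le hc (hbd n).1
  have hstep : ∀ n, α * (d * (g n - T) / T) + β ≤ Real.log (b (n+1)) - Real.log (b n) := by
    intro n
    obtain ⟨h1, h2⟩ := hxb n
    have h1x : 0 < 1 + d * (g n - T) / T := by linarith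
    rw [hrec n, Real.log_mul (ne_of_gt (hbpos n)) (ne_of_gt h1x)]
    have := chord_log hd0 hd1 h1 h2
    linarith
  have htel : ∀ N : ℕ, ∑ n ∈ Finset.Icc 1 N, (α * (d * (g n - T) / T) + β)
      ≤ Real.log (b (N+1)) - Real.log (b 1) := by
    intro N
    induction N with
    | zero => simp
    | succ k ih =>
      rw [Finset.sum_Icc_succ_top (by omega : 1 ≤ k + 1)]
      have := hstep (k+1)
      linarith
  intro N hN
  have hNpos : (0:ℝ) < N := by exact_mod_cast Nat.pos_of_ne_zero (by omega)
  set S := ∑ n ∈ Finset.Icc 1 N, g n with hS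
  have hterm : ∀ n, α * (d * (g n - T) / T) + β = (α * d / T) * g n + (β - α * d) := by
    intro n; field_simp; ring
  have hsum : ∑ n ∈ Finset.Icc 1 N, (α * (d * (g n - T) / T) + β)
      = (α * d / T) * S + N * (β - α * d) := by
    calc ∑ n ∈ Finset.Icc 1 N, (α * (d * (g n - T) / T) + β)
        = ∑ n ∈ Finset.Icc 1 N, ((α * d / T) * g n + (β - α * d)) :=
          Finset.sum_congr rfl (fun n _ => hterm n)
      _ = (α * d / T) * S + N * (β - α * d) := by
          rw [Finset.sum_add_distrib, ← Finset.mul_sum, Finset.sum_const, Nat.card_Icc]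
          simp [Nat.add_sub_cancel, nsmul_eq_mul]
          exact Or.inl rfl
  have hCpos : 0 < C := lt_of_lt_of_le hc hcC
  have hlog : Real.log (b (N+1)) - Real.log (b 1) ≤ Real.log (C / c) := by
    rw [Real.log_div (ne_of_gt hCpos) (ne_of_gt hc)]
    have h1 := Real.log_le_log (hbpos (N+1)) (hbd (N+1)).2
    have h2 := Real.log_le_log hc (hbd 1).1
    linarith
  have key : (α * d / T) * S + N * (β - α * d) ≤ Real.log (C / c) := by
    have := htel N
    rw [hsum] at this
    linarith
  have key2 : α * d * S ≤ T * Real.log (C / c) + N * (α * d - β) * T := by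
    have h := mul_le_mul_of_nonneg_left key (le_of_lt hT)
    have : T * ((α * d / T) * S + N * (β - α * d))
        = α * d * S + T * (N * (β - α * d)) := by field_simp
    rw [this] at h
    nlinarith [h]
  have hrhs : T * Real.log (C / c) / (N * α * d) + (1 - β / (α * d)) * T
      = (T * Real.log (C / c) + N * (α * d - β) * T) / (N * (α * d)) := by
    field_simp
  rw [hrhs, div_le_div_iff₀ hNpos (by positivity)]
  nlinarith [key2]
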